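/- (Theorem 1, pointwise Fisher consistency.) Fix L ≥ 2, strictly positive class priors π_1,...,π_L, strictly positive reals δ_1,...,δ_L, and conditional class-probabilities η ∈ ℝ^L with η_y > 0 for all y and Σ_y η_y = 1. Consider the pairwise margin loss with weights α_y = δ_y/π_y and margins Δ_{y y'} = log(δ_{y'}/δ_y), and its conditional risk C(f) = Σ_y η_y · α_y · log( 1 + Σ_{y'≠y} exp(Δ_{y y'})·exp(f_{y'} − f_y) ). Then C attains its minimum over ℝ^L, and every minimizer f* satisfies f*_y − f*_{y'} = log(η_y/π_y) − log(η_{y'}/π_{y'}) for all y, y'; in particular the maximizers of y ↦ f*_y coincide with the maximizers of y ↦ η_y/π_y, the Bayes-optimal prediction for the balanced error. -/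

import Mathlib

private lemma gibbs_aux {n : ℕ} (u t : Fin n → ℝ) (hu : ∀ y, 0 < u y)
    (ht : ∀ y, 0 < t y) (hts : ∑ y, u y * t y = ∑ y, u y) :
    0 ≤ ∑ y, u y * (-Real.log (t y)) ∧
      (∑ y, u y * (-Real.log (t y)) = 0 → ∀ y, t y = 1) := by
  have hle : ∀ y ∈ Finset.univ, u y * (1 - t y) ≤ u y * (-Real.log (t y)) := by
    intro y _
    have h := Real.log_le_sub_one_of_pos (ht y)
    nlinarith [hu y]
  have hsum0 : ∑ y : Fin n, u y * (1 - t y) = 0 := by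
    have h : ∑ y : Fin n, u y * (1 - t y) = ∑ y : Fin n, u y - ∑ y : Fin n, u y * t y := by
      rw [← Finset.sum_sub_distrib]
      exact Finset.sum_congr rfl fun y _ => by ring
    rw [h, hts, sub_self]
  constructor
  · calc (0:ℝ) = ∑ y : Fin n, u y * (1 - t y) := hsum0.symm
      _ ≤ _ := Finset.sum_le_sum hle
  · intro h0 y
    have heq : ∑ y : Fin n, u y * (1 - t y) = ∑ y : Fin n, u y * (-Real.log (t y)) := by
      rw [hsum0, h0]
    have hy := (Finset.sum_eq_sum_iff_of_le hle).mp heq y (Finset.mem_univ y)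
    by_contra hne
    have := Real.log_lt_sub_one_of_pos (ht y) hne
    nlinarith [hu y]

/-- Theorem 1: the pairwise margin loss with weights `α y = δ y / π y` and margins
`Δ_{y y'} = log (δ y' / δ y)` is (pointwise) Fisher consistent for the balanced error. -/
theorem pairwise_margin_loss_fisher_consistent
    (L : ℕ) (hL : 2 ≤ L)
    (π : Fin L → ℝ) (hπ : ∀ y, 0 < π y)
    (δ : Fin L → ℝ) (hδ : ∀ y, 0 < δ y)
    (η : Fin L → ℝ) (hη : ∀ y, 0 < η y) (hsum : ∑ y : Fin L, η y = 1)
    (C : (Fin L → ℝ) → ℝ)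
    (hC : ∀ f : Fin L → ℝ,
      C f = ∑ y : Fin L, η y * ((δ y / π y) *
        Real.log (1 + ∑ y' ∈ Finset.univ.erase y,
          Real.exp (Real.log (δ y' / δ y)) * Real.exp (f y' - f y)))) :
    (∃ f : Fin L → ℝ, ∀ g : Fin L → ℝ, C f ≤ C g) ∧
    (∀ f : Fin L → ℝ, (∀ g : Fin L → ℝ, C f ≤ C g) →
      (∀ y y' : Fin L,
        f y - f y' = Real.log (η y / π y) - Real.log (η y' / π y')) ∧
      {y : Fin L | ∀ y' : Fin L, f y' ≤ f y} =
        {y : Fin L | ∀ y' : Fin L, η y' / π y' ≤ η y / π y}) := by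
  have hne0 : Nonempty (Fin L) := ⟨⟨0, by omega⟩⟩
  set w : Fin L → ℝ := fun y => η y * (δ y / π y) with hwdef
  have hw : ∀ y, 0 < w y := fun y => by
    have h1 := hη y; have h2 := hδ y; have h3 := hπ y
    simp only [hwdef]; positivity
  set W : ℝ := ∑ y, w y with hWdef
  have hW : 0 < W := Finset.sum_pos (fun y _ => hw y) Finset.univ_nonempty
  have hA : ∀ (f : Fin L → ℝ) (y : Fin L), 0 < δ y * Real.exp (f y) := fun f y => by
    have := hδ y; positivity
  have hS : ∀ f : Fin L → ℝ, 0 < ∑ z, δ z * Real.exp (f z) := fun f =>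
    Finset.sum_pos (fun z _ => hA f z) Finset.univ_nonempty
  -- closed form for C
  have hC' : ∀ f : Fin L → ℝ,
      C f = ∑ y, w y * (Real.log (∑ z, δ z * Real.exp (f z))
        - Real.log (δ y * Real.exp (f y))) := by
    intro f
    rw [hC f]
    refine Finset.sum_congr rfl fun y _ => ?_
    have h1 : ∀ y', Real.exp (Real.log (δ y' / δ y)) * Real.exp (f y' - f y)
        = (δ y' * Real.exp (f y')) / (δ y * Real.exp (f y)) := by
      intro y'
      rw [Real.exp_log (div_pos (hδ y') (hδ y)), Real.exp_sub, div_mul_div_comm]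
    have hratio : (1 : ℝ) + ∑ y' ∈ Finset.univ.erase y,
        Real.exp (Real.log (δ y' / δ y)) * Real.exp (f y' - f y)
        = (∑ z, δ z * Real.exp (f z)) / (δ y * Real.exp (f y)) := by
      rw [Finset.sum_congr rfl (fun y' _ => h1 y'), ← Finset.sum_div,
        Finset.sum_erase_eq_sub (Finset.mem_univ y)]
      have hAy := (hA f y).ne'
      field_simp
      have hδy := (hδ y).ne'
      rw [eq_div_iff hδy, add_mul, div_mul_cancel₀ _ hδy]
      ring
    rw [hratio, Real.log_div (hS f).ne' (hA f y).ne']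
    simp only [hwdef]; ring
  -- the candidate minimizer
  set fs : Fin L → ℝ := fun y => Real.log (η y / π y) with hfsdef
  have hAfs : ∀ y, δ y * Real.exp (fs y) = w y := by
    intro y
    simp only [hfsdef, hwdef]
    rw [Real.exp_log (div_pos (hη y) (hπ y))]
    ring
  have hSfs : ∑ z, δ z * Real.exp (fs z) = W := by
    rw [hWdef]; exact Finset.sum_congr rfl fun z _ => hAfs z
  -- key identity
  have key : ∀ f : Fin L → ℝ,
      C f - C fs = ∑ y, w y * (-Real.log ((δ y * Real.exp (f y) * W)
        / (w y * (∑ z, δ z * Real.exp (f z))))) := by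
    intro f
    rw [hC' f, hC' fs, hSfs, ← Finset.sum_sub_distrib]
    refine Finset.sum_congr rfl fun y _ => ?_
    rw [hAfs y]
    have h1 : Real.log ((δ y * Real.exp (f y) * W) / (w y * (∑ z, δ z * Real.exp (f z))))
        = (Real.log (δ y * Real.exp (f y)) + Real.log W)
          - (Real.log (w y) + Real.log (∑ z, δ z * Real.exp (f z))) := by
      rw [Real.log_div (mul_pos (hA f y) hW).ne' (mul_pos (hw y) (hS f)).ne',
        Real.log_mul (hA f y).ne' hW.ne', Real.log_mul (hw y).ne' (hS f).ne']
    rw [h1]; ring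
  have htpos : ∀ (f : Fin L → ℝ) (y : Fin L),
      0 < (δ y * Real.exp (f y) * W) / (w y * (∑ z, δ z * Real.exp (f z))) := by
    intro f y
    exact div_pos (mul_pos (hA f y) hW) (mul_pos (hw y) (hS f))
  have htsum : ∀ f : Fin L → ℝ,
      ∑ y, w y * ((δ y * Real.exp (f y) * W) / (w y * (∑ z, δ z * Real.exp (f z))))
        = ∑ y, w y := by
    intro f
    have hSne := (hS f).ne'
    have h1 : ∀ y : Fin L, w y * ((δ y * Real.exp (f y) * W)
        / (w y * (∑ z, δ z * Real.exp (f z))))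
        = (δ y * Real.exp (f y)) * (W / (∑ z, δ z * Real.exp (f z))) := by
      intro y
      have hwy := (hw y).ne'
      field_simp
    rw [Finset.sum_congr rfl (fun y _ => h1 y), ← Finset.sum_mul,
      mul_comm, div_mul_cancel₀ W hSne]
  -- minimality of fs
  have hmin : ∀ f : Fin L → ℝ, C fs ≤ C f := by
    intro f
    have hg := (gibbs_aux w _ hw (htpos f) (htsum f)).1
    have hk := key f
    linarith
  refine ⟨⟨fs, hmin⟩, ?_⟩
  intro f hf
  have h0 : C f = C fs := le_antisymm (hf fs) (hmin f)
  have hsum0 : ∑ y, w y * (-Real.log ((δ y * Real.exp (f y) * W)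
      / (w y * (∑ z, δ z * Real.exp (f z))))) = 0 := by
    rw [← key f, h0, sub_self]
  have hall := (gibbs_aux w _ hw (htpos f) (htsum f)).2 hsum0
  have hSpos := hS f
  have hwπ : ∀ y, w y * π y = η y * δ y := by
    intro y
    have := (hπ y).ne'
    simp only [hwdef]
    field_simp
  have hE : ∀ y, Real.exp (f y)
      = (η y * (∑ z, δ z * Real.exp (f z))) / (π y * W) := by
    intro y
    have h2 : δ y * Real.exp (f y) * W = w y * (∑ z, δ z * Real.exp (f z)) :=
      (div_eq_one_iff_eq (mul_pos (hw y) hSpos).ne').mp (hall y)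
    rw [eq_div_iff (mul_pos (hπ y) hW).ne']
    have h3 : δ y * (Real.exp (f y) * (π y * W)) = δ y * (η y * (∑ z, δ z * Real.exp (f z))) := by
      linear_combination π y * h2 + (∑ z, δ z * Real.exp (f z)) * hwπ y
    exact mul_left_cancel₀ (hδ y).ne' h3
  have hmargin : ∀ y y' : Fin L,
      f y - f y' = Real.log (η y / π y) - Real.log (η y' / π y') := by
    intro y y'
    have h1 : Real.exp (f y - f y') = (η y / π y) / (η y' / π y') := by
      rw [Real.exp_sub, hE y, hE y']
      have := (hη y).ne'; have := (hη y').ne'; have := (hπ y).ne'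
      have := (hπ y').ne'; have := hW.ne'; have := hSpos.ne'
      field_simp
    have h2 : f y - f y' = Real.log ((η y / π y) / (η y' / π y')) := by
      rw [← h1, Real.log_exp]
    rw [h2, Real.log_div (div_pos (hη y) (hπ y)).ne' (div_pos (hη y') (hπ y')).ne']
  refine ⟨hmargin, ?_⟩
  have hmono : ∀ y y' : Fin L, (f y' ≤ f y ↔ η y' / π y' ≤ η y / π y) := by
    intro y y'
    rw [← sub_nonneg, hmargin y y', sub_nonneg,
      Real.log_le_log_iff (div_pos (hη y') (hπ y')) (div_pos (hη y) (hπ y))]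
  ext y
  simp only [Set.mem_setOf_eq]
  exact forall_congr' fun y' => hmono y y'
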